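/- arXiv:2502.02819 — 6 statements merged into one kernel-verified Lean document; each statement's English description precedes it below -/
import Mathlib

section
/- There is no affine map x ↦ εx + c on ℤ/13 with ε ∈ {1, −1} and c ∈ ℤ/13 that maps the set {0, 1, 3, 9} onto the set {0, 1, 4, 6}. -/
/-- No affine map `x ↦ εx + c` on `ℤ/13` with `ε = ±1` maps `{0, 1, 3, 9}` onto `{0, 1, 4, 6}`. -/
theorem stmt_6 :
    ¬ ∃ (ε c : ZMod 13), (ε = 1 ∨ ε = -1) ∧
      (fun x => ε * x + c) '' ({0, 1, 3, 9} : Set (ZMod 13)) =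
        ({0, 1, 4, 6} : Set (ZMod 13)) := by
  rintro ⟨ε, c, hε, h⟩
  have key : ∀ x : ZMod 13, x ∈ ({0,1,3,9} : Set (ZMod 13)) →
      ε * x + c ∈ ({0,1,4,6} : Set (ZMod 13)) := fun x hx => h ▸ Set.mem_image_of_mem _ hx
  have h0 := key 0 (by simp)
  have h1 := key 1 (by simp)
  have h3 := key 3 (by simp)
  have h9 := key 9 (by simp)
  simp only [Set.mem_insert_iff, Set.mem_singleton_iff, mul_zero, mul_one, zero_add] at h0 h1 h3 h9
  rcases hε with rfl | rfl <;> rcases h0 with rfl | rfl | rfl | rfl <;>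
    revert h1 h3 h9 <;> decide
end

section
/- Let A = P_A + 13ℤ and B = P_B + 13ℤ be the 1D periodic point sets with P_A = {0, 1, 3, 9} and P_B = {0, 1, 4, 6}. Then for every real r > 0 and every j ∈ {1,...,4}, the number of ordered pairs (p, q) with p ∈ P_A, q ∈ A, and |p − q| = r equals the number of ordered pairs (p, q) with p ∈ P_B, q ∈ B, and |p − q| = r. That is, A and B have identical theta series (identical radial pair-distance counts). -/
/-- The 1D periodic point set with period `L` and basis `P`. -/
def perSet (L : ℝ) (P : Set ℝ) : Set ℝ := {t | ∃ x ∈ P, ∃ n : ℤ, t = x + L * n}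

/-- The number of ordered pairs `(p, q)` with `p` in the basis `P`, `q` in the
periodic set `S`, at distance `r`. -/
noncomputable def pairCount1D (P S : Set ℝ) (r : ℝ) : ℕ :=
  {pq : ℝ × ℝ | pq.1 ∈ P ∧ pq.2 ∈ S ∧ |pq.1 - pq.2| = r}.ncard


noncomputable def res (q : ℝ) : ℝ := q - 13 * ⌊q / 13⌋

lemma res_spec (x : ℝ) (n : ℤ) (h0 : 0 ≤ x) (h1 : x < 13) : res (x + 13 * (n : ℝ)) = x := by
  have h2 : (x + 13 * (n : ℝ)) / 13 = x / 13 + (n : ℝ) := by ring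
  have h3 : ⌊x / 13⌋ = 0 := by
    rw [Int.floor_eq_zero_iff]
    constructor
    · positivity
    · rw [div_lt_one (by norm_num : (0:ℝ) < 13)]; exact h1
  rw [res, h2, Int.floor_add_intCast, h3]
  push_cast
  ring

noncomputable def g (p x : ℝ) : ℝ × ℝ :=
  if p = 0 then (if x = 0 then (0,0) else if x = 1 then (0,1) else if x = 3 then (1,4) else (4,0))
  else if p = 1 then (if x = 0 then (1,0) else if x = 1 then (1,1) else if x = 3 then (4,6) else (6,1))
  else if p = 3 then (if x = 0 then (4,1) else if x = 1 then (6,4) else if x = 3 then (4,4) else (0,6))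
  else (if x = 0 then (0,4) else if x = 1 then (1,6) else if x = 3 then (6,0) else (6,6))


noncomputable def mk (tab : ℝ → ℝ → ℝ × ℝ) : ℝ × ℝ → ℝ × ℝ :=
  fun pq => ((tab pq.1 (res pq.2)).1, pq.2 + (tab pq.1 (res pq.2)).1 - pq.1)

lemma mk_spec (tab : ℝ → ℝ → ℝ × ℝ) (p x p' x' : ℝ) (n m : ℤ)
    (hg : tab p x = (p', x')) (h0 : 0 ≤ x) (h1 : x < 13)
    (hrel : x + 13 * (n : ℝ) + p' - p = x' + 13 * (m : ℝ)) :
    mk tab (p, x + 13 * (n : ℝ)) = (p', x' + 13 * (m : ℝ)) := by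
  unfold mk
  dsimp only
  rw [res_spec x n h0 h1, hg]
  exact Prod.ext rfl (by dsimp only; linarith)

noncomputable def ginv (p x : ℝ) : ℝ × ℝ :=
  if p = 0 then (if x = 0 then (0,0) else if x = 1 then (0,1) else if x = 4 then (9,0) else (3,9))
  else if p = 1 then (if x = 0 then (1,0) else if x = 1 then (1,1) else if x = 4 then (0,3) else (9,1))
  else if p = 4 then (if x = 0 then (0,9) else if x = 1 then (3,0) else if x = 4 then (3,3) else (1,3))
  else (if x = 0 then (9,3) else if x = 1 then (1,9) else if x = 4 then (3,1) else (9,9))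

def SA (r : ℝ) : Set (ℝ × ℝ) :=
  {pq : ℝ × ℝ | pq.1 ∈ ({0, 1, 3, 9} : Set ℝ) ∧ pq.2 ∈ perSet 13 ({0, 1, 3, 9} : Set ℝ) ∧ |pq.1 - pq.2| = r}

def SB (r : ℝ) : Set (ℝ × ℝ) :=
  {pq : ℝ × ℝ | pq.1 ∈ ({0, 1, 4, 6} : Set ℝ) ∧ pq.2 ∈ perSet 13 ({0, 1, 4, 6} : Set ℝ) ∧ |pq.1 - pq.2| = r}

lemma forward (r : ℝ) : ∀ z ∈ SA r, mk g z ∈ SB r ∧ mk ginv (mk g z) = z := by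
  intro z hz
  obtain ⟨p, q⟩ := z
  obtain ⟨hp, ⟨x, hx, n, hn⟩, hr'⟩ := hz
  dsimp only at hp hn hr' ⊢
  subst hn
  simp only [Set.mem_insert_iff, Set.mem_singleton_iff] at hp hx
  rcases hp with rfl | rfl | rfl | rfl <;> rcases hx with rfl | rfl | rfl | rfl
  · have e1 := mk_spec g 0 0 0 0 n n (by norm_num [g]) (by norm_num) (by norm_num) (by push_cast; ring)
    have e2 := mk_spec ginv 0 0 0 0 n n (by norm_num [ginv]) (by norm_num) (by norm_num) (by push_cast; ring)
    refine ⟨?_, ?_⟩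
    · rw [e1]
      refine ⟨by norm_num, ⟨0, by norm_num, n, rfl⟩, ?_⟩
      rw [show (0:ℝ) - (0 + 13 * ((n : ℤ) : ℝ)) = 0 - (0 + 13 * (n : ℝ)) by push_cast; ring]
      exact hr'
    · rw [e1, e2]
  · have e1 := mk_spec g 0 1 0 1 n n (by norm_num [g]) (by norm_num) (by norm_num) (by push_cast; ring)
    have e2 := mk_spec ginv 0 1 0 1 n n (by norm_num [ginv]) (by norm_num) (by norm_num) (by push_cast; ring)
    refine ⟨?_, ?_⟩
    · rw [e1]
      refine ⟨by norm_num, ⟨1, by norm_num, n, rfl⟩, ?_⟩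
      rw [show (0:ℝ) - (1 + 13 * ((n : ℤ) : ℝ)) = 0 - (1 + 13 * (n : ℝ)) by push_cast; ring]
      exact hr'
    · rw [e1, e2]
  · have e1 := mk_spec g 0 3 1 4 n n (by norm_num [g]) (by norm_num) (by norm_num) (by push_cast; ring)
    have e2 := mk_spec ginv 1 4 0 3 n n (by norm_num [ginv]) (by norm_num) (by norm_num) (by push_cast; ring)
    refine ⟨?_, ?_⟩
    · rw [e1]
      refine ⟨by norm_num, ⟨4, by norm_num, n, rfl⟩, ?_⟩
      rw [show (1:ℝ) - (4 + 13 * ((n : ℤ) : ℝ)) = 0 - (3 + 13 * (n : ℝ)) by push_cast; ring]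
      exact hr'
    · rw [e1, e2]
  · have e1 := mk_spec g 0 9 4 0 n (n + 1) (by norm_num [g]) (by norm_num) (by norm_num) (by push_cast; ring)
    have e2 := mk_spec ginv 4 0 0 9 (n + 1) n (by norm_num [ginv]) (by norm_num) (by norm_num) (by push_cast; ring)
    refine ⟨?_, ?_⟩
    · rw [e1]
      refine ⟨by norm_num, ⟨0, by norm_num, (n + 1), rfl⟩, ?_⟩
      rw [show (4:ℝ) - (0 + 13 * (((n + 1) : ℤ) : ℝ)) = 0 - (9 + 13 * (n : ℝ)) by push_cast; ring]
      exact hr'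
    · rw [e1, e2]
  · have e1 := mk_spec g 1 0 1 0 n n (by norm_num [g]) (by norm_num) (by norm_num) (by push_cast; ring)
    have e2 := mk_spec ginv 1 0 1 0 n n (by norm_num [ginv]) (by norm_num) (by norm_num) (by push_cast; ring)
    refine ⟨?_, ?_⟩
    · rw [e1]
      refine ⟨by norm_num, ⟨0, by norm_num, n, rfl⟩, ?_⟩
      rw [show (1:ℝ) - (0 + 13 * ((n : ℤ) : ℝ)) = 1 - (0 + 13 * (n : ℝ)) by push_cast; ring]
      exact hr'
    · rw [e1, e2]
  · have e1 := mk_spec g 1 1 1 1 n n (by norm_num [g]) (by norm_num) (by norm_num) (by push_cast; ring)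
    have e2 := mk_spec ginv 1 1 1 1 n n (by norm_num [ginv]) (by norm_num) (by norm_num) (by push_cast; ring)
    refine ⟨?_, ?_⟩
    · rw [e1]
      refine ⟨by norm_num, ⟨1, by norm_num, n, rfl⟩, ?_⟩
      rw [show (1:ℝ) - (1 + 13 * ((n : ℤ) : ℝ)) = 1 - (1 + 13 * (n : ℝ)) by push_cast; ring]
      exact hr'
    · rw [e1, e2]
  · have e1 := mk_spec g 1 3 4 6 n n (by norm_num [g]) (by norm_num) (by norm_num) (by push_cast; ring)
    have e2 := mk_spec ginv 4 6 1 3 n n (by norm_num [ginv]) (by norm_num) (by norm_num) (by push_cast; ring)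
    refine ⟨?_, ?_⟩
    · rw [e1]
      refine ⟨by norm_num, ⟨6, by norm_num, n, rfl⟩, ?_⟩
      rw [show (4:ℝ) - (6 + 13 * ((n : ℤ) : ℝ)) = 1 - (3 + 13 * (n : ℝ)) by push_cast; ring]
      exact hr'
    · rw [e1, e2]
  · have e1 := mk_spec g 1 9 6 1 n (n + 1) (by norm_num [g]) (by norm_num) (by norm_num) (by push_cast; ring)
    have e2 := mk_spec ginv 6 1 1 9 (n + 1) n (by norm_num [ginv]) (by norm_num) (by norm_num) (by push_cast; ring)
    refine ⟨?_, ?_⟩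
    · rw [e1]
      refine ⟨by norm_num, ⟨1, by norm_num, (n + 1), rfl⟩, ?_⟩
      rw [show (6:ℝ) - (1 + 13 * (((n + 1) : ℤ) : ℝ)) = 1 - (9 + 13 * (n : ℝ)) by push_cast; ring]
      exact hr'
    · rw [e1, e2]
  · have e1 := mk_spec g 3 0 4 1 n n (by norm_num [g]) (by norm_num) (by norm_num) (by push_cast; ring)
    have e2 := mk_spec ginv 4 1 3 0 n n (by norm_num [ginv]) (by norm_num) (by norm_num) (by push_cast; ring)
    refine ⟨?_, ?_⟩
    · rw [e1]
      refine ⟨by norm_num, ⟨1, by norm_num, n, rfl⟩, ?_⟩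
      rw [show (4:ℝ) - (1 + 13 * ((n : ℤ) : ℝ)) = 3 - (0 + 13 * (n : ℝ)) by push_cast; ring]
      exact hr'
    · rw [e1, e2]
  · have e1 := mk_spec g 3 1 6 4 n n (by norm_num [g]) (by norm_num) (by norm_num) (by push_cast; ring)
    have e2 := mk_spec ginv 6 4 3 1 n n (by norm_num [ginv]) (by norm_num) (by norm_num) (by push_cast; ring)
    refine ⟨?_, ?_⟩
    · rw [e1]
      refine ⟨by norm_num, ⟨4, by norm_num, n, rfl⟩, ?_⟩
      rw [show (6:ℝ) - (4 + 13 * ((n : ℤ) : ℝ)) = 3 - (1 + 13 * (n : ℝ)) by push_cast; ring]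
      exact hr'
    · rw [e1, e2]
  · have e1 := mk_spec g 3 3 4 4 n n (by norm_num [g]) (by norm_num) (by norm_num) (by push_cast; ring)
    have e2 := mk_spec ginv 4 4 3 3 n n (by norm_num [ginv]) (by norm_num) (by norm_num) (by push_cast; ring)
    refine ⟨?_, ?_⟩
    · rw [e1]
      refine ⟨by norm_num, ⟨4, by norm_num, n, rfl⟩, ?_⟩
      rw [show (4:ℝ) - (4 + 13 * ((n : ℤ) : ℝ)) = 3 - (3 + 13 * (n : ℝ)) by push_cast; ring]
      exact hr'
    · rw [e1, e2]
  · have e1 := mk_spec g 3 9 0 6 n n (by norm_num [g]) (by norm_num) (by norm_num) (by push_cast; ring)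
    have e2 := mk_spec ginv 0 6 3 9 n n (by norm_num [ginv]) (by norm_num) (by norm_num) (by push_cast; ring)
    refine ⟨?_, ?_⟩
    · rw [e1]
      refine ⟨by norm_num, ⟨6, by norm_num, n, rfl⟩, ?_⟩
      rw [show (0:ℝ) - (6 + 13 * ((n : ℤ) : ℝ)) = 3 - (9 + 13 * (n : ℝ)) by push_cast; ring]
      exact hr'
    · rw [e1, e2]
  · have e1 := mk_spec g 9 0 0 4 n (n - 1) (by norm_num [g]) (by norm_num) (by norm_num) (by push_cast; ring)
    have e2 := mk_spec ginv 0 4 9 0 (n - 1) n (by norm_num [ginv]) (by norm_num) (by norm_num) (by push_cast; ring)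
    refine ⟨?_, ?_⟩
    · rw [e1]
      refine ⟨by norm_num, ⟨4, by norm_num, (n - 1), rfl⟩, ?_⟩
      rw [show (0:ℝ) - (4 + 13 * (((n - 1) : ℤ) : ℝ)) = 9 - (0 + 13 * (n : ℝ)) by push_cast; ring]
      exact hr'
    · rw [e1, e2]
  · have e1 := mk_spec g 9 1 1 6 n (n - 1) (by norm_num [g]) (by norm_num) (by norm_num) (by push_cast; ring)
    have e2 := mk_spec ginv 1 6 9 1 (n - 1) n (by norm_num [ginv]) (by norm_num) (by norm_num) (by push_cast; ring)
    refine ⟨?_, ?_⟩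
    · rw [e1]
      refine ⟨by norm_num, ⟨6, by norm_num, (n - 1), rfl⟩, ?_⟩
      rw [show (1:ℝ) - (6 + 13 * (((n - 1) : ℤ) : ℝ)) = 9 - (1 + 13 * (n : ℝ)) by push_cast; ring]
      exact hr'
    · rw [e1, e2]
  · have e1 := mk_spec g 9 3 6 0 n n (by norm_num [g]) (by norm_num) (by norm_num) (by push_cast; ring)
    have e2 := mk_spec ginv 6 0 9 3 n n (by norm_num [ginv]) (by norm_num) (by norm_num) (by push_cast; ring)
    refine ⟨?_, ?_⟩
    · rw [e1]
      refine ⟨by norm_num, ⟨0, by norm_num, n, rfl⟩, ?_⟩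
      rw [show (6:ℝ) - (0 + 13 * ((n : ℤ) : ℝ)) = 9 - (3 + 13 * (n : ℝ)) by push_cast; ring]
      exact hr'
    · rw [e1, e2]
  · have e1 := mk_spec g 9 9 6 6 n n (by norm_num [g]) (by norm_num) (by norm_num) (by push_cast; ring)
    have e2 := mk_spec ginv 6 6 9 9 n n (by norm_num [ginv]) (by norm_num) (by norm_num) (by push_cast; ring)
    refine ⟨?_, ?_⟩
    · rw [e1]
      refine ⟨by norm_num, ⟨6, by norm_num, n, rfl⟩, ?_⟩
      rw [show (6:ℝ) - (6 + 13 * ((n : ℤ) : ℝ)) = 9 - (9 + 13 * (n : ℝ)) by push_cast; ring]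
      exact hr'
    · rw [e1, e2]

lemma backward (r : ℝ) : ∀ z ∈ SB r, mk ginv z ∈ SA r ∧ mk g (mk ginv z) = z := by
  intro z hz
  obtain ⟨p, q⟩ := z
  obtain ⟨hp, ⟨x, hx, n, hn⟩, hr'⟩ := hz
  dsimp only at hp hn hr' ⊢
  subst hn
  simp only [Set.mem_insert_iff, Set.mem_singleton_iff] at hp hx
  rcases hp with rfl | rfl | rfl | rfl <;> rcases hx with rfl | rfl | rfl | rfl
  · have e1 := mk_spec ginv 0 0 0 0 n n (by norm_num [ginv]) (by norm_num) (by norm_num) (by push_cast; ring)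
    have e2 := mk_spec g 0 0 0 0 n n (by norm_num [g]) (by norm_num) (by norm_num) (by push_cast; ring)
    refine ⟨?_, ?_⟩
    · rw [e1]
      refine ⟨by norm_num, ⟨0, by norm_num, n, rfl⟩, ?_⟩
      rw [show (0:ℝ) - (0 + 13 * ((n : ℤ) : ℝ)) = 0 - (0 + 13 * (n : ℝ)) by push_cast; ring]
      exact hr'
    · rw [e1, e2]
  · have e1 := mk_spec ginv 0 1 0 1 n n (by norm_num [ginv]) (by norm_num) (by norm_num) (by push_cast; ring)
    have e2 := mk_spec g 0 1 0 1 n n (by norm_num [g]) (by norm_num) (by norm_num) (by push_cast; ring)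
    refine ⟨?_, ?_⟩
    · rw [e1]
      refine ⟨by norm_num, ⟨1, by norm_num, n, rfl⟩, ?_⟩
      rw [show (0:ℝ) - (1 + 13 * ((n : ℤ) : ℝ)) = 0 - (1 + 13 * (n : ℝ)) by push_cast; ring]
      exact hr'
    · rw [e1, e2]
  · have e1 := mk_spec ginv 0 4 9 0 n (n + 1) (by norm_num [ginv]) (by norm_num) (by norm_num) (by push_cast; ring)
    have e2 := mk_spec g 9 0 0 4 (n + 1) n (by norm_num [g]) (by norm_num) (by norm_num) (by push_cast; ring)
    refine ⟨?_, ?_⟩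
    · rw [e1]
      refine ⟨by norm_num, ⟨0, by norm_num, (n + 1), rfl⟩, ?_⟩
      rw [show (9:ℝ) - (0 + 13 * (((n + 1) : ℤ) : ℝ)) = 0 - (4 + 13 * (n : ℝ)) by push_cast; ring]
      exact hr'
    · rw [e1, e2]
  · have e1 := mk_spec ginv 0 6 3 9 n n (by norm_num [ginv]) (by norm_num) (by norm_num) (by push_cast; ring)
    have e2 := mk_spec g 3 9 0 6 n n (by norm_num [g]) (by norm_num) (by norm_num) (by push_cast; ring)
    refine ⟨?_, ?_⟩
    · rw [e1]
      refine ⟨by norm_num, ⟨9, by norm_num, n, rfl⟩, ?_⟩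
      rw [show (3:ℝ) - (9 + 13 * ((n : ℤ) : ℝ)) = 0 - (6 + 13 * (n : ℝ)) by push_cast; ring]
      exact hr'
    · rw [e1, e2]
  · have e1 := mk_spec ginv 1 0 1 0 n n (by norm_num [ginv]) (by norm_num) (by norm_num) (by push_cast; ring)
    have e2 := mk_spec g 1 0 1 0 n n (by norm_num [g]) (by norm_num) (by norm_num) (by push_cast; ring)
    refine ⟨?_, ?_⟩
    · rw [e1]
      refine ⟨by norm_num, ⟨0, by norm_num, n, rfl⟩, ?_⟩
      rw [show (1:ℝ) - (0 + 13 * ((n : ℤ) : ℝ)) = 1 - (0 + 13 * (n : ℝ)) by push_cast; ring]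
      exact hr'
    · rw [e1, e2]
  · have e1 := mk_spec ginv 1 1 1 1 n n (by norm_num [ginv]) (by norm_num) (by norm_num) (by push_cast; ring)
    have e2 := mk_spec g 1 1 1 1 n n (by norm_num [g]) (by norm_num) (by norm_num) (by push_cast; ring)
    refine ⟨?_, ?_⟩
    · rw [e1]
      refine ⟨by norm_num, ⟨1, by norm_num, n, rfl⟩, ?_⟩
      rw [show (1:ℝ) - (1 + 13 * ((n : ℤ) : ℝ)) = 1 - (1 + 13 * (n : ℝ)) by push_cast; ring]
      exact hr'
    · rw [e1, e2]
  · have e1 := mk_spec ginv 1 4 0 3 n n (by norm_num [ginv]) (by norm_num) (by norm_num) (by push_cast; ring)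
    have e2 := mk_spec g 0 3 1 4 n n (by norm_num [g]) (by norm_num) (by norm_num) (by push_cast; ring)
    refine ⟨?_, ?_⟩
    · rw [e1]
      refine ⟨by norm_num, ⟨3, by norm_num, n, rfl⟩, ?_⟩
      rw [show (0:ℝ) - (3 + 13 * ((n : ℤ) : ℝ)) = 1 - (4 + 13 * (n : ℝ)) by push_cast; ring]
      exact hr'
    · rw [e1, e2]
  · have e1 := mk_spec ginv 1 6 9 1 n (n + 1) (by norm_num [ginv]) (by norm_num) (by norm_num) (by push_cast; ring)
    have e2 := mk_spec g 9 1 1 6 (n + 1) n (by norm_num [g]) (by norm_num) (by norm_num) (by push_cast; ring)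
    refine ⟨?_, ?_⟩
    · rw [e1]
      refine ⟨by norm_num, ⟨1, by norm_num, (n + 1), rfl⟩, ?_⟩
      rw [show (9:ℝ) - (1 + 13 * (((n + 1) : ℤ) : ℝ)) = 1 - (6 + 13 * (n : ℝ)) by push_cast; ring]
      exact hr'
    · rw [e1, e2]
  · have e1 := mk_spec ginv 4 0 0 9 n (n - 1) (by norm_num [ginv]) (by norm_num) (by norm_num) (by push_cast; ring)
    have e2 := mk_spec g 0 9 4 0 (n - 1) n (by norm_num [g]) (by norm_num) (by norm_num) (by push_cast; ring)
    refine ⟨?_, ?_⟩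
    · rw [e1]
      refine ⟨by norm_num, ⟨9, by norm_num, (n - 1), rfl⟩, ?_⟩
      rw [show (0:ℝ) - (9 + 13 * (((n - 1) : ℤ) : ℝ)) = 4 - (0 + 13 * (n : ℝ)) by push_cast; ring]
      exact hr'
    · rw [e1, e2]
  · have e1 := mk_spec ginv 4 1 3 0 n n (by norm_num [ginv]) (by norm_num) (by norm_num) (by push_cast; ring)
    have e2 := mk_spec g 3 0 4 1 n n (by norm_num [g]) (by norm_num) (by norm_num) (by push_cast; ring)
    refine ⟨?_, ?_⟩
    · rw [e1]
      refine ⟨by norm_num, ⟨0, by norm_num, n, rfl⟩, ?_⟩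
      rw [show (3:ℝ) - (0 + 13 * ((n : ℤ) : ℝ)) = 4 - (1 + 13 * (n : ℝ)) by push_cast; ring]
      exact hr'
    · rw [e1, e2]
  · have e1 := mk_spec ginv 4 4 3 3 n n (by norm_num [ginv]) (by norm_num) (by norm_num) (by push_cast; ring)
    have e2 := mk_spec g 3 3 4 4 n n (by norm_num [g]) (by norm_num) (by norm_num) (by push_cast; ring)
    refine ⟨?_, ?_⟩
    · rw [e1]
      refine ⟨by norm_num, ⟨3, by norm_num, n, rfl⟩, ?_⟩
      rw [show (3:ℝ) - (3 + 13 * ((n : ℤ) : ℝ)) = 4 - (4 + 13 * (n : ℝ)) by push_cast; ring]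
      exact hr'
    · rw [e1, e2]
  · have e1 := mk_spec ginv 4 6 1 3 n n (by norm_num [ginv]) (by norm_num) (by norm_num) (by push_cast; ring)
    have e2 := mk_spec g 1 3 4 6 n n (by norm_num [g]) (by norm_num) (by norm_num) (by push_cast; ring)
    refine ⟨?_, ?_⟩
    · rw [e1]
      refine ⟨by norm_num, ⟨3, by norm_num, n, rfl⟩, ?_⟩
      rw [show (1:ℝ) - (3 + 13 * ((n : ℤ) : ℝ)) = 4 - (6 + 13 * (n : ℝ)) by push_cast; ring]
      exact hr'
    · rw [e1, e2]
  · have e1 := mk_spec ginv 6 0 9 3 n n (by norm_num [ginv]) (by norm_num) (by norm_num) (by push_cast; ring)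
    have e2 := mk_spec g 9 3 6 0 n n (by norm_num [g]) (by norm_num) (by norm_num) (by push_cast; ring)
    refine ⟨?_, ?_⟩
    · rw [e1]
      refine ⟨by norm_num, ⟨3, by norm_num, n, rfl⟩, ?_⟩
      rw [show (9:ℝ) - (3 + 13 * ((n : ℤ) : ℝ)) = 6 - (0 + 13 * (n : ℝ)) by push_cast; ring]
      exact hr'
    · rw [e1, e2]
  · have e1 := mk_spec ginv 6 1 1 9 n (n - 1) (by norm_num [ginv]) (by norm_num) (by norm_num) (by push_cast; ring)
    have e2 := mk_spec g 1 9 6 1 (n - 1) n (by norm_num [g]) (by norm_num) (by norm_num) (by push_cast; ring)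
    refine ⟨?_, ?_⟩
    · rw [e1]
      refine ⟨by norm_num, ⟨9, by norm_num, (n - 1), rfl⟩, ?_⟩
      rw [show (1:ℝ) - (9 + 13 * (((n - 1) : ℤ) : ℝ)) = 6 - (1 + 13 * (n : ℝ)) by push_cast; ring]
      exact hr'
    · rw [e1, e2]
  · have e1 := mk_spec ginv 6 4 3 1 n n (by norm_num [ginv]) (by norm_num) (by norm_num) (by push_cast; ring)
    have e2 := mk_spec g 3 1 6 4 n n (by norm_num [g]) (by norm_num) (by norm_num) (by push_cast; ring)
    refine ⟨?_, ?_⟩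
    · rw [e1]
      refine ⟨by norm_num, ⟨1, by norm_num, n, rfl⟩, ?_⟩
      rw [show (3:ℝ) - (1 + 13 * ((n : ℤ) : ℝ)) = 6 - (4 + 13 * (n : ℝ)) by push_cast; ring]
      exact hr'
    · rw [e1, e2]
  · have e1 := mk_spec ginv 6 6 9 9 n n (by norm_num [ginv]) (by norm_num) (by norm_num) (by push_cast; ring)
    have e2 := mk_spec g 9 9 6 6 n n (by norm_num [g]) (by norm_num) (by norm_num) (by push_cast; ring)
    refine ⟨?_, ?_⟩
    · rw [e1]
      refine ⟨by norm_num, ⟨9, by norm_num, n, rfl⟩, ?_⟩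
      rw [show (9:ℝ) - (9 + 13 * ((n : ℤ) : ℝ)) = 6 - (6 + 13 * (n : ℝ)) by push_cast; ring]
      exact hr'
    · rw [e1, e2]

/-- The 1D crystals with period 13 and bases `{0,1,3,9}` and `{0,1,4,6}` have identical
theta series: for every `r > 0`, the pair-distance counts agree. -/
theorem stmt_7 :
    ∀ r : ℝ, 0 < r →
      pairCount1D ({0, 1, 3, 9} : Set ℝ) (perSet 13 ({0, 1, 3, 9} : Set ℝ)) r =
      pairCount1D ({0, 1, 4, 6} : Set ℝ) (perSet 13 ({0, 1, 4, 6} : Set ℝ)) r := by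
  intro r _
  have hbij : Set.BijOn (mk g) (SA r) (SB r) :=
    Set.InvOn.bijOn ⟨fun z hz => (forward r z hz).2, fun z hz => (backward r z hz).2⟩
      (fun z hz => (forward r z hz).1) (fun z hz => (backward r z hz).1)
  show (SA r).ncard = (SB r).ncard
  rw [← hbij.image_eq]
  exact (Set.ncard_image_of_injOn hbij.injOn).symm
end

section
/- There is no isometry of ℝ mapping the periodic point set A = {0, 1, 3, 9} + 13ℤ onto B = {0, 1, 4, 6} + 13ℤ. -/
/-- Every isometry of `ℝ` is a translation or a reflection. -/
lemma iso_real_form (f : ℝ → ℝ) (hf : Isometry f) :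
    (∀ x, f x = f 0 + x) ∨ (∀ x, f x = f 0 - x) := by
  have key : ∀ x : ℝ, f x - f 0 = x ∨ f x - f 0 = -x := by
    intro x
    have d := hf.dist_eq x 0
    rw [Real.dist_eq, Real.dist_eq, sub_zero] at d
    rcases abs_eq_abs.mp d with h | h
    · left; linarith
    · right; linarith
  rcases key 1 with h1 | h1
  · left; intro x
    rcases key x with h | h
    · linarith
    · have d := hf.dist_eq x 1
      rw [Real.dist_eq, Real.dist_eq] at d
      have e : f x - f 1 = -x - 1 := by linarith
      rw [e] at d
      rcases abs_eq_abs.mp d with h2 | h2 <;> linarith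
  · right; intro x
    rcases key x with h | h
    · have d := hf.dist_eq x 1
      rw [Real.dist_eq, Real.dist_eq] at d
      have e : f x - f 1 = x + 1 := by linarith
      rw [e] at d
      rcases abs_eq_abs.mp d with h2 | h2 <;> linarith
    · linarith

/-- No isometry of `ℝ` maps `{0,1,3,9} + 13ℤ` onto `{0,1,4,6} + 13ℤ`. -/
theorem stmt_8 :
    ¬ ∃ f : ℝ → ℝ, Isometry f ∧
      f '' perSet 13 ({0, 1, 3, 9} : Set ℝ) = perSet 13 ({0, 1, 4, 6} : Set ℝ) := by
  rintro ⟨f, hf, himg⟩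
  have hmem : ∀ a ∈ ({0, 1, 3, 9} : Set ℝ),
      ∃ B : ℤ, (B = 0 ∨ B = 1 ∨ B = 4 ∨ B = 6) ∧ ∃ n : ℤ, f a = B + 13 * n := by
    intro a ha
    have hfa : f a ∈ perSet 13 ({0, 1, 4, 6} : Set ℝ) := by
      rw [← himg]
      exact ⟨a, ⟨a, ha, 0, by simp⟩, rfl⟩
    obtain ⟨b, hb, n, hn⟩ := hfa
    simp only [Set.mem_insert_iff, Set.mem_singleton_iff] at hb
    rcases hb with rfl | rfl | rfl | rfl
    · exact ⟨0, by norm_num, n, by push_cast; linarith⟩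
    · exact ⟨1, by norm_num, n, by push_cast; linarith⟩
    · exact ⟨4, by norm_num, n, by push_cast; linarith⟩
    · exact ⟨6, by norm_num, n, by push_cast; linarith⟩
  obtain ⟨B0, hB0, n0, h0⟩ := hmem 0 (by simp)
  obtain ⟨B1, hB1, n1, h1⟩ := hmem 1 (by simp)
  obtain ⟨B3, hB3, n3, h3⟩ := hmem 3 (by simp)
  obtain ⟨B9, hB9, n9, h9⟩ := hmem 9 (by simp)
  rcases iso_real_form f hf with hform | hform
  · rw [hform 1] at h1
    rw [hform 3] at h3
    rw [hform 9] at h9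
    have e1 : 13 * (n1 - n0) = 1 + B0 - B1 := by
      have : (13 : ℝ) * ((n1 : ℝ) - n0) = 1 + (B0 : ℝ) - B1 := by linarith
      exact_mod_cast this
    have e3 : 13 * (n3 - n0) = 3 + B0 - B3 := by
      have : (13 : ℝ) * ((n3 : ℝ) - n0) = 3 + (B0 : ℝ) - B3 := by linarith
      exact_mod_cast this
    have e9 : 13 * (n9 - n0) = 9 + B0 - B9 := by
      have : (13 : ℝ) * ((n9 : ℝ) - n0) = 9 + (B0 : ℝ) - B9 := by linarith
      exact_mod_cast this
    omega
  · rw [hform 1] at h1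
    rw [hform 3] at h3
    rw [hform 9] at h9
    have e1 : 13 * (n1 - n0) = -1 + B0 - B1 := by
      have : (13 : ℝ) * ((n1 : ℝ) - n0) = -1 + (B0 : ℝ) - B1 := by linarith
      exact_mod_cast this
    have e3 : 13 * (n3 - n0) = -3 + B0 - B3 := by
      have : (13 : ℝ) * ((n3 : ℝ) - n0) = -3 + (B0 : ℝ) - B3 := by linarith
      exact_mod_cast this
    have e9 : 13 * (n9 - n0) = -9 + B0 - B9 := by
      have : (13 : ℝ) * ((n9 : ℝ) - n0) = -9 + (B0 : ℝ) - B9 := by linarith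
      exact_mod_cast this
    omega
end

section
/- Every pair distance of a 1D periodic point set S = P + Lℤ (with P ⊆ [0, L) finite) has the form |x − y + nL| for some x, y ∈ P and n ∈ ℤ; conversely every such value with (x, y, n) ≠ (x, x, 0) is realized as a distance between two distinct points of S. Hence if two such sets S₁ = P₁ + Lℤ and S₂ = P₂ + Lℤ satisfy that the multisets of gaps {|x − y| : x, y ∈ Pᵢ, x ≠ y} ∪ {L − |x − y| : x, y ∈ Pᵢ, x ≠ y} coincide (with multiplicity), then S₁ and S₂ have identical pair-distance multisets (are isospectral). -/
/-- The multiplicity of `r` in the circular gap multiset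
`{|x − y| : x ≠ y ∈ P} ∪ {L − |x − y| : x ≠ y ∈ P}`. -/
noncomputable def gapCount (L : ℝ) (P : Set ℝ) (r : ℝ) : ℕ :=
  {xy : ℝ × ℝ | xy.1 ∈ P ∧ xy.2 ∈ P ∧ xy.1 ≠ xy.2 ∧ |xy.1 - xy.2| = r}.ncard +
  {xy : ℝ × ℝ | xy.1 ∈ P ∧ xy.2 ∈ P ∧ xy.1 ≠ xy.2 ∧ L - |xy.1 - xy.2| = r}.ncard

noncomputable def rho (L t : ℝ) : ℝ := t - L * ⌊t / L⌋

lemma rho_mem_Ico {L : ℝ} (hL : 0 < L) (t : ℝ) : rho L t ∈ Set.Ico 0 L := by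
  have h1 : (⌊t/L⌋ : ℝ) ≤ t/L := Int.floor_le _
  have h2 : t/L < ⌊t/L⌋ + 1 := Int.lt_floor_add_one _
  have ht : L * (t / L) = t := by field_simp
  constructor
  · have := mul_le_mul_of_nonneg_left h1 hL.le
    simp only [rho]; nlinarith
  · have := mul_lt_mul_of_pos_left h2 hL
    simp only [rho]; nlinarith

lemma rho_add_int {L : ℝ} (hL : 0 < L) {y : ℝ} (hy : y ∈ Set.Ico 0 L) (n : ℤ) :
    rho L (y + L * n) = y := by
  have hfl : ⌊(y + L * n) / L⌋ = n := by
    have : (y + L * n) / L = y / L + n := by field_simp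
    rw [this, Int.floor_add_intCast, Int.floor_eq_zero_iff.2, zero_add]
    constructor
    · exact div_nonneg hy.1 hL.le
    · rw [div_lt_one hL]; exact hy.2
  simp only [rho, hfl]; ring

lemma rho_self {L : ℝ} (hL : 0 < L) {y : ℝ} (hy : y ∈ Set.Ico 0 L) : rho L y = y := by
  have := rho_add_int hL hy 0
  simpa using this

lemma mem_perSet_iff {L : ℝ} (hL : 0 < L) {P : Set ℝ} (hs : P ⊆ Set.Ico 0 L) (t : ℝ) :
    t ∈ perSet L P ↔ rho L t ∈ P := by
  constructor
  · rintro ⟨x, hx, n, rfl⟩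
    rwa [rho_add_int hL (hs hx)]
  · intro h
    exact ⟨rho L t, h, ⌊t / L⌋, by simp [rho]⟩

noncomputable def cShift (Q : Finset ℝ) (a : ℝ) : ℕ :=
  (Q.filter (fun p => p + a ∈ Q)).card

noncomputable def ocnt (Q : Finset ℝ) (a : ℝ) : ℕ :=
  (Q.offDiag.filter (fun p => p.1 - p.2 = a)).card

lemma cShift_eq (Q : Finset ℝ) (a : ℝ) :
    cShift Q a = ocnt Q a + (if a = 0 then Q.card else 0) := by
  classical
  have h1 : cShift Q a = ((Q ×ˢ Q).filter (fun p => p.1 - p.2 = a)).card := by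
    apply Finset.card_bij (fun p _ => (p + a, p))
    · intro p hp
      simp only [Finset.mem_filter, Finset.mem_product] at hp ⊢
      exact ⟨⟨hp.2, hp.1⟩, by ring⟩
    · intro p hp q hq h
      simpa using congrArg Prod.snd h
    · intro p hp
      simp only [Finset.mem_filter, Finset.mem_product] at hp
      have h21 : p.2 + a = p.1 := by linarith [hp.2]
      exact ⟨p.2, by simp only [Finset.mem_filter]; exact ⟨hp.1.2, h21 ▸ hp.1.1⟩,
        by ext <;> simp [h21]⟩
  rw [h1]
  rw [← Finset.card_filter_add_card_filter_not
    (s := (Q ×ˢ Q).filter (fun p => p.1 - p.2 = a)) (p := fun p => p.1 ≠ p.2)]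
  congr 1
  · rw [Finset.filter_filter]
    unfold ocnt
    congr 1
    ext p
    simp only [Finset.mem_filter, Finset.mem_offDiag, Finset.mem_product]
    tauto
  · by_cases ha : a = 0
    · subst ha
      simp only [if_pos rfl]
      apply Finset.card_bij (fun p _ => p.1)
      · intro p hp
        simp only [Finset.filter_filter, Finset.mem_filter, Finset.mem_product] at hp
        exact hp.1.1
      · intro p hp q hq h
        simp only [Finset.filter_filter, Finset.mem_filter, Finset.mem_product,
          not_not] at hp hq
        ext
        · exact h
        · rw [← hp.2.2, ← hq.2.2]; exact h
      · intro b hb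
        refine ⟨(b, b), ?_, rfl⟩
        simp only [Finset.filter_filter, Finset.mem_filter, Finset.mem_product, not_not]
        refine ⟨⟨hb, hb⟩, by ring, by trivial⟩
    · simp only [if_neg ha]
      rw [Finset.card_eq_zero]
      ext p
      simp only [Finset.filter_filter, Finset.mem_filter, Finset.mem_product, not_not,
        Finset.notMem_empty, iff_false, not_and]
      intro _ h h2
      exact ha (by rw [h2] at h; linarith)

lemma gapCount_finset (L : ℝ) (Q : Finset ℝ) (s : ℝ) :
    gapCount L ↑Q s = (Q.offDiag.filter (fun p => |p.1 - p.2| = s)).card +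
      (Q.offDiag.filter (fun p => L - |p.1 - p.2| = s)).card := by
  unfold gapCount
  congr 1
  · rw [← Set.ncard_coe_finset]
    congr 1
    ext p
    simp only [Finset.coe_filter, Finset.mem_offDiag, Set.mem_setOf_eq, Finset.mem_coe]
    tauto
  · rw [← Set.ncard_coe_finset]
    congr 1
    ext p
    simp only [Finset.coe_filter, Finset.mem_offDiag, Set.mem_setOf_eq, Finset.mem_coe]
    tauto

lemma abs_filter_split (L : ℝ) (Q : Finset ℝ) {s : ℝ} (hs : 0 < s) :
    (Q.offDiag.filter (fun p => |p.1 - p.2| = s)).card = ocnt Q s + ocnt Q (-s) := by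
  classical
  unfold ocnt
  rw [← Finset.card_union_of_disjoint, ← Finset.filter_or]
  · congr 1
    ext p
    simp only [Finset.mem_filter]
    rw [abs_eq hs.le]
  · rw [Finset.disjoint_filter]
    intro p _ h1 h2
    exact absurd (by linarith : s = 0) hs.ne'

lemma ocnt_zero (Q : Finset ℝ) : ocnt Q 0 = 0 := by
  unfold ocnt
  rw [Finset.card_eq_zero, Finset.filter_eq_empty_iff]
  intro p hp
  rw [Finset.mem_offDiag] at hp
  intro h
  exact hp.2.2 (by linarith)

lemma gapCount_eq (L : ℝ) (hL : 0 < L) (Q : Finset ℝ) {s : ℝ} (hs : s ∈ Set.Ico 0 L) :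
    gapCount L ↑Q s = ocnt Q s + ocnt Q (-s) + (ocnt Q (L - s) + ocnt Q (s - L)) := by
  rw [gapCount_finset]
  congr 1
  · rcases eq_or_lt_of_le hs.1 with h | h
    · subst h
      rw [ocnt_zero, neg_zero, ocnt_zero]
      simp only [Nat.add_zero]
      rw [Finset.card_eq_zero, Finset.filter_eq_empty_iff]
      intro p hp
      rw [Finset.mem_offDiag] at hp
      intro hh
      exact hp.2.2 (by rw [abs_eq_zero] at hh; linarith)
    · exact abs_filter_split L Q h
  · have h2 : (Q.offDiag.filter (fun p => L - |p.1 - p.2| = s)) =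
        (Q.offDiag.filter (fun p => |p.1 - p.2| = L - s)) := by
      apply Finset.filter_congr
      intro p _
      constructor <;> intro h <;> simp_all <;> linarith
    rw [h2, abs_filter_split L Q (by linarith [hs.2] : (0:ℝ) < L - s), neg_sub]

lemma rho_shift {L : ℝ} (hL : 0 < L) (t : ℝ) (n : ℤ) : rho L (t + L * n) = rho L t := by
  have h : (t + L * n) / L = t / L + n := by field_simp
  simp only [rho, h, Int.floor_add_intCast]
  push_cast
  ring

lemma pairCount_master {L : ℝ} (hL : 0 < L) (Q : Finset ℝ) (hs : ↑Q ⊆ Set.Ico 0 L)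
    {r : ℝ} (hr : 0 < r) :
    pairCount1D ↑Q (perSet L ↑Q) r =
      gapCount L ↑Q (rho L r) + (if rho L r = 0 then 2 * Q.card else 0) := by
  classical
  set s := rho L r with hsdef
  have hsI : s ∈ Set.Ico 0 L := rho_mem_Ico hL r
  have hrs : r = s + L * ⌊r / L⌋ := by simp [hsdef, rho]
  -- membership characterizations
  have hplus : ∀ p ∈ Q, (p + r ∈ perSet L ↑Q ↔ (p + s ∈ Q ∨ p + s - L ∈ Q)) := by
    intro p hp
    have hpI := hs hp
    rw [mem_perSet_iff hL hs]
    have hrw : p + r = (p + s) + L * (⌊r / L⌋ : ℤ) := by linarith [hrs]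
    rw [hrw, rho_shift hL]
    by_cases hc : p + s < L
    · rw [rho_self hL ⟨by linarith [hpI.1, hsI.1], hc⟩]
      constructor
      · exact Or.inl
      · rintro (h | h)
        · exact h
        · exact absurd (hs (Finset.mem_coe.mpr h)).1 (by push_neg; linarith)
    · push_neg at hc
      have : rho L (p + s) = p + s - L := by
        have := rho_add_int hL (y := p + s - L)
          ⟨by linarith, by linarith [hpI.2, hsI.2]⟩ 1
        rw [← this]; congr 1; ring
      rw [this]
      constructor
      · exact Or.inr
      · rintro (h | h)
        · exact absurd (hs (Finset.mem_coe.mpr h)).2 (by push_neg; linarith)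
        · exact h
  have hminus : ∀ p ∈ Q, (p - r ∈ perSet L ↑Q ↔ (p - s ∈ Q ∨ p - s + L ∈ Q)) := by
    intro p hp
    have hpI := hs hp
    obtain ⟨hp0, hp1⟩ := hpI
    obtain ⟨hs0, hs1⟩ := hsI
    rw [mem_perSet_iff hL hs]
    have hrw : p - r = (p - s) + L * ((-⌊r / L⌋ : ℤ) : ℝ) := by push_cast; linarith [hrs]
    rw [hrw, rho_shift hL]
    by_cases hc : 0 ≤ p - s
    · rw [rho_self hL ⟨hc, by linarith⟩]
      constructor
      · exact Or.inl
      · rintro (h | h)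
        · exact h
        · exact absurd (hs (Finset.mem_coe.mpr h)).2 (by push_neg; linarith)
    · push_neg at hc
      have : rho L (p - s) = p - s + L := by
        have := rho_add_int hL (y := p - s + L)
          ⟨by linarith, by linarith⟩ (-1)
        rw [← this]; congr 1; push_cast; ring
      rw [this]
      constructor
      · exact Or.inr
      · rintro (h | h)
        · exact absurd (hs (Finset.mem_coe.mpr h)).1 (by push_neg; linarith)
        · exact h
  obtain ⟨hs0, hs1⟩ := hsI
  classical
  set A : Finset ℝ := Q.filter (fun p => p + s ∈ Q ∨ p + s - L ∈ Q) with hA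
  set B : Finset ℝ := Q.filter (fun p => p - s ∈ Q ∨ p - s + L ∈ Q) with hB
  have hset : {pq : ℝ × ℝ | pq.1 ∈ (↑Q : Set ℝ) ∧ pq.2 ∈ perSet L ↑Q ∧ |pq.1 - pq.2| = r}
      = (fun p => (p, p + r)) '' ↑A ∪ (fun p => (p, p - r)) '' ↑B := by
    ext ⟨p, q⟩
    simp only [Set.mem_setOf_eq, Set.mem_union, Set.mem_image, hA, hB, Finset.coe_filter,
      Finset.mem_coe, Prod.mk.injEq]
    constructor
    · rintro ⟨h1, h2, h3⟩
      rcases (abs_eq hr.le).mp h3 with h | h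
      · right
        exact ⟨p, ⟨h1, (hminus p h1).mp
          (by rw [show p - r = q by linarith]; exact h2)⟩, rfl, by linarith⟩
      · left
        exact ⟨p, ⟨h1, (hplus p h1).mp
          (by rw [show p + r = q by linarith]; exact h2)⟩, rfl, by linarith⟩
    · rintro (⟨p', ⟨hp', hm⟩, rfl, rfl⟩ | ⟨p', ⟨hp', hm⟩, rfl, rfl⟩)
      · exact ⟨hp', (hplus p' hp').mpr hm,
          by rw [show p' - (p' + r) = -r by ring, abs_neg, abs_of_pos hr]⟩
      · exact ⟨hp', (hminus p' hp').mpr hm,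
          by rw [show p' - (p' - r) = r by ring, abs_of_pos hr]⟩
  have hinj1 : Set.InjOn (fun p : ℝ => (p, p + r)) ↑A := fun a _ b _ h => by
    simpa using congrArg Prod.fst h
  have hinj2 : Set.InjOn (fun p : ℝ => (p, p - r)) ↑B := fun a _ b _ h => by
    simpa using congrArg Prod.fst h
  have hdisj : Disjoint ((fun p : ℝ => (p, p + r)) '' ↑A) ((fun p : ℝ => (p, p - r)) '' ↑B) := by
    rw [Set.disjoint_left]
    rintro ⟨x, y⟩ ⟨a, _, ha⟩ ⟨b, _, hb⟩
    simp only [Prod.mk.injEq] at ha hb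
    obtain ⟨rfl, h1⟩ := ha
    obtain ⟨rfl, h2⟩ := hb
    exact absurd (by linarith : r = 0) hr.ne'
  have hcount : pairCount1D ↑Q (perSet L ↑Q) r = A.card + B.card := by
    unfold pairCount1D
    rw [hset, Set.ncard_union_eq hdisj ((A.finite_toSet).image _) ((B.finite_toSet).image _),
      Set.ncard_image_of_injOn hinj1, Set.ncard_image_of_injOn hinj2,
      Set.ncard_coe_finset, Set.ncard_coe_finset]
  have hAcard : A.card = cShift Q s + cShift Q (s - L) := by
    have e1 : Finset.filter (fun p => p + s - L ∈ Q) Q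
        = Finset.filter (fun p => p + (s - L) ∈ Q) Q := by
      apply Finset.filter_congr
      intro p _
      rw [show p + s - L = p + (s - L) by ring]
    have hd : Disjoint (Finset.filter (fun p => p + s ∈ Q) Q)
        (Finset.filter (fun p => p + s - L ∈ Q) Q) := by
      rw [Finset.disjoint_filter]
      intro p _ h1 h2
      have g1 := (hs (Finset.mem_coe.mpr h1)).2
      have g2 := (hs (Finset.mem_coe.mpr h2)).1
      linarith
    rw [hA, Finset.filter_or, Finset.card_union_of_disjoint hd, e1]
    rfl
  have hBcard : B.card = cShift Q (-s) + cShift Q (L - s) := by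
    have e1 : Finset.filter (fun p => p - s ∈ Q) Q
        = Finset.filter (fun p => p + (-s) ∈ Q) Q := by
      apply Finset.filter_congr
      intro p _
      rw [show p - s = p + (-s) by ring]
    have e2 : Finset.filter (fun p => p - s + L ∈ Q) Q
        = Finset.filter (fun p => p + (L - s) ∈ Q) Q := by
      apply Finset.filter_congr
      intro p _
      rw [show p - s + L = p + (L - s) by ring]
    have hd : Disjoint (Finset.filter (fun p => p - s ∈ Q) Q)
        (Finset.filter (fun p => p - s + L ∈ Q) Q) := by
      rw [Finset.disjoint_filter]
      intro p _ h1 h2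
      have g1 := (hs (Finset.mem_coe.mpr h1)).1
      have g2 := (hs (Finset.mem_coe.mpr h2)).2
      linarith
    rw [hB, Finset.filter_or, Finset.card_union_of_disjoint hd, e1, e2]
    rfl
  rw [hcount, hAcard, hBcard, cShift_eq, cShift_eq, cShift_eq, cShift_eq,
    gapCount_eq L hL Q ⟨hs0, hs1⟩]
  rw [if_neg (by intro h; linarith : s - L ≠ 0), if_neg (by intro h; linarith : L - s ≠ 0)]
  by_cases hzero : s = 0
  · rw [if_pos hzero, if_pos (by rw [hzero, neg_zero]), if_pos hzero]
    omega
  · rw [if_neg hzero, if_neg (fun h => hzero (by linarith)), if_neg hzero]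
    omega

lemma card_eq_of_gap {L : ℝ} (Q₁ Q₂ : Finset ℝ)
    (hgap : ∀ r, gapCount L ↑Q₁ r = gapCount L ↑Q₂ r)
    (h1 : Q₁.Nonempty) (h2 : Q₂.Nonempty) : Q₁.card = Q₂.card := by
  classical
  set U : Finset (ℝ × ℝ) := Q₁.offDiag ∪ Q₂.offDiag with hU
  set D : Finset ℝ := (U.image (fun p => |p.1 - p.2|)) ∪ (U.image (fun p => L - |p.1 - p.2|))
    with hD
  have key : ∀ Q : Finset ℝ, Q.offDiag ⊆ U →
      ∑ t ∈ D, gapCount L ↑Q t = 2 * Q.offDiag.card := by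
    intro Q hQ
    have e1 : Q.offDiag.card = ∑ t ∈ D, (Q.offDiag.filter (fun p => |p.1 - p.2| = t)).card :=
      Finset.card_eq_sum_card_fiberwise (fun p hp =>
        Finset.mem_union_left _ (Finset.mem_image_of_mem _ (hQ hp)))
    have e2 : Q.offDiag.card = ∑ t ∈ D, (Q.offDiag.filter (fun p => L - |p.1 - p.2| = t)).card :=
      Finset.card_eq_sum_card_fiberwise (fun p hp =>
        Finset.mem_union_right _ (Finset.mem_image_of_mem _ (hQ hp)))
    have : ∑ t ∈ D, gapCount L ↑Q t
        = ∑ t ∈ D, ((Q.offDiag.filter (fun p => |p.1 - p.2| = t)).card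
          + (Q.offDiag.filter (fun p => L - |p.1 - p.2| = t)).card) :=
      Finset.sum_congr rfl (fun t _ => gapCount_finset L Q t)
    rw [this, Finset.sum_add_distrib, ← e1, ← e2]
    omega
  have k1 := key Q₁ Finset.subset_union_left
  have k2 := key Q₂ Finset.subset_union_right
  have hsum : ∑ t ∈ D, gapCount L ↑Q₁ t = ∑ t ∈ D, gapCount L ↑Q₂ t :=
    Finset.sum_congr rfl (fun t _ => hgap t)
  have hoff : Q₁.offDiag.card = Q₂.offDiag.card := by omega
  rw [Finset.offDiag_card, Finset.offDiag_card] at hoff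
  have c1 : 1 ≤ Q₁.card := Finset.Nonempty.card_pos h1
  have c2 : 1 ≤ Q₂.card := Finset.Nonempty.card_pos h2
  have hz : (Q₁.card : ℤ) * Q₁.card - Q₁.card = (Q₂.card : ℤ) * Q₂.card - Q₂.card := by
    have m1 : Q₁.card ≤ Q₁.card * Q₁.card := Nat.le_mul_of_pos_left _ c1
    have m2 : Q₂.card ≤ Q₂.card * Q₂.card := Nat.le_mul_of_pos_left _ c2
    exact_mod_cast congrArg (fun n : ℕ => (n : ℤ)) hoff
  have : (Q₁.card : ℤ) = Q₂.card := by
    rcases lt_trichotomy (Q₁.card : ℤ) (Q₂.card : ℤ) with h | h | h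
    · exfalso
      nlinarith [mul_pos (by linarith : (0:ℤ) < (Q₂.card : ℤ) - Q₁.card)
        (by push_cast; linarith [c1, c2] : (0:ℤ) < (Q₂.card : ℤ) + Q₁.card - 1)]
    · exact h
    · exfalso
      nlinarith [mul_pos (by linarith : (0:ℤ) < (Q₁.card : ℤ) - Q₂.card)
        (by push_cast; linarith [c1, c2] : (0:ℤ) < (Q₁.card : ℤ) + Q₂.card - 1)]
  exact_mod_cast this

/-- Every pair distance of `S = P + Lℤ` has the form `|x − y + nL|` with `x, y ∈ P`, `n ∈ ℤ`;
conversely every such value with `(x, y, n) ≠ (x, x, 0)` is realized by two distinct points of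
`S`. Hence if two such sets have coinciding circular gap multisets, they are isospectral. -/
theorem stmt_9 (L : ℝ) (hL : 0 < L) (P₁ P₂ : Set ℝ)
    (hf₁ : P₁.Finite) (hf₂ : P₂.Finite)
    (hs₁ : P₁ ⊆ Set.Ico 0 L) (hs₂ : P₂ ⊆ Set.Ico 0 L)
    (hne₁ : P₁.Nonempty) (hne₂ : P₂.Nonempty) :
    (∀ p ∈ perSet L P₁, ∀ q ∈ perSet L P₁,
      ∃ x ∈ P₁, ∃ y ∈ P₁, ∃ n : ℤ, dist p q = |x - y + n * L|) ∧
    (∀ x ∈ P₁, ∀ y ∈ P₁, ∀ n : ℤ, ¬(x = y ∧ n = 0) →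
      ∃ p ∈ perSet L P₁, ∃ q ∈ perSet L P₁, p ≠ q ∧ dist p q = |x - y + n * L|) ∧
    ((∀ r : ℝ, gapCount L P₁ r = gapCount L P₂ r) →
      ∀ r : ℝ, 0 < r →
        pairCount1D P₁ (perSet L P₁) r = pairCount1D P₂ (perSet L P₂) r) := by
  refine ⟨?_, ?_, ?_⟩
  · rintro p ⟨x, hx, m, rfl⟩ q ⟨y, hy, n, rfl⟩
    refine ⟨x, hx, y, hy, m - n, ?_⟩
    rw [Real.dist_eq]
    congr 1
    push_cast
    ring
  · intro x hx y hy n hn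
    refine ⟨x, ⟨x, hx, 0, by push_cast; ring⟩, y + L * (-n), ⟨y, hy, -n, by push_cast; ring⟩, ?_, ?_⟩
    · intro heq
      have hxy : x - y + n * L = 0 := by
        push_cast at heq
        linarith [heq]
      by_cases h0 : n = 0
      · subst h0
        push_neg at hn
        exact hn (by push_cast at hxy; linarith) rfl
      · have h1 : (1 : ℝ) ≤ |(n : ℝ)| := by
          rw [← Int.cast_abs]
          exact_mod_cast Int.one_le_abs h0
        have hx' := hs₁ hx
        have hy' := hs₁ hy
        have : |x - y| = |(n : ℝ)| * L := by
          have : x - y = -(n * L) := by linarith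
          rw [this, abs_neg, abs_mul, abs_of_pos hL]
        have hlt : |x - y| < L := by
          rw [abs_lt]
          constructor <;> [linarith [hx'.1, hy'.2]; linarith [hx'.2, hy'.1]]
        nlinarith
    · rw [Real.dist_eq]
      congr 1
      push_cast
      ring
  · intro hgap r hr
    have hco1 : (hf₁.toFinset : Set ℝ) = P₁ := hf₁.coe_toFinset
    have hco2 : (hf₂.toFinset : Set ℝ) = P₂ := hf₂.coe_toFinset
    rw [← hco1, ← hco2]
    rw [pairCount_master hL hf₁.toFinset (by rw [hco1]; exact hs₁) hr,
      pairCount_master hL hf₂.toFinset (by rw [hco2]; exact hs₂) hr]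
    have hgap' : ∀ t, gapCount L ↑hf₁.toFinset t = gapCount L ↑hf₂.toFinset t := by
      intro t
      rw [hco1, hco2]
      exact hgap t
    rw [hgap' (rho L r), card_eq_of_gap hf₁.toFinset hf₂.toFinset hgap'
      (hf₁.toFinset_nonempty.mpr hne₁) (hf₂.toFinset_nonempty.mpr hne₂)]
end

section
/- Let C₁, C₂ ⊆ ℝ^d be crystals with n-particle bases sharing common lattice basis vectors a₁, …, a_d (so Cᵢ = {p + n₁a₁ + ⋯ + n_d a_d : p ∈ P_{Cᵢ}, n_k ∈ ℤ} with finite P_{Cᵢ}). Suppose that for every difference vector r_{ij} = p_i − p_j = λ₁a₁ + ⋯ + λ_d a_d with p_i, p_j ∈ P_{C₁}, there exist vectors a′₁, …, a′_d, a point q ∈ C₂, and a linear isometry T of ℝ^d with a′_k = T(a_k) for all k, such that (i) the lattice coset Λ′₂ = {n₁a′₁ + ⋯ + n_d a′_d + q : n_k ∈ ℤ} is contained in C₂, and (ii) r′_{ij} + q ∈ C₂, where r′_{ij} = λ₁a′₁ + ⋯ + λ_d a′_d. Then every distance that occurs between two points of C₁ also occurs between two points of C₂ (the distance set of C₁ is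 contained in that of C₂). -/
/-- The crystal (periodic point set) with lattice basis vectors `a` and particle basis `P`. -/
def crystalSet {d : ℕ} (a : Fin d → EuclideanSpace ℝ (Fin d))
    (P : Set (EuclideanSpace ℝ (Fin d))) : Set (EuclideanSpace ℝ (Fin d)) :=
  {x | ∃ p ∈ P, ∃ n : Fin d → ℤ, x = p + ∑ k, (n k : ℝ) • a k}

/-- Theorem 1 of the paper: a sufficient condition for the distance set of crystal `C₁`
to be contained in that of crystal `C₂`, when both share lattice basis vectors `a`. -/
theorem stmt_10 {d : ℕ} (a : Fin d → EuclideanSpace ℝ (Fin d))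
    (ha : LinearIndependent ℝ a)
    (P₁ P₂ : Set (EuclideanSpace ℝ (Fin d))) (hP₁ : P₁.Finite) (hP₂ : P₂.Finite)
    (h : ∀ pi ∈ P₁, ∀ pj ∈ P₁, ∀ lam : Fin d → ℝ, pi - pj = ∑ k, lam k • a k →
      ∃ (a' : Fin d → EuclideanSpace ℝ (Fin d)) (q : EuclideanSpace ℝ (Fin d))
        (T : EuclideanSpace ℝ (Fin d) →ₗᵢ[ℝ] EuclideanSpace ℝ (Fin d)),
        (∀ k, a' k = T (a k)) ∧
        {x | ∃ n : Fin d → ℤ, x = (∑ k, (n k : ℝ) • a' k) + q} ⊆ crystalSet a P₂ ∧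
        (∑ k, lam k • a' k) + q ∈ crystalSet a P₂) :
    ∀ x ∈ crystalSet a P₁, ∀ y ∈ crystalSet a P₁,
      ∃ x' ∈ crystalSet a P₂, ∃ y' ∈ crystalSet a P₂, dist x' y' = dist x y := by
  intro x hx y hy
  obtain ⟨p, hp, n, rfl⟩ := hx
  obtain ⟨p', hp', m, rfl⟩ := hy
  have hcard : Fintype.card (Fin d) = Module.finrank ℝ (EuclideanSpace ℝ (Fin d)) := by
    simp
  let B : Module.Basis (Fin d) ℝ (EuclideanSpace ℝ (Fin d)) :=
    Module.Basis.mk ha (ha.span_eq_top_of_card_eq_finrank' hcard).ge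
  have hB : ∀ k, B k = a k := fun k => by
    simp [B, Module.Basis.mk_apply]
  set lam : Fin d → ℝ := fun k => B.repr (p - p') k with hlam
  have hrep : p - p' = ∑ k, lam k • a k := by
    conv_lhs => rw [← B.sum_repr (p - p')]
    exact Finset.sum_congr rfl fun k _ => by rw [hB]
  obtain ⟨a', q, T, hT, hsub, hmem⟩ := h p hp p' hp' lam hrep
  refine ⟨(∑ k, lam k • a' k) + q, hmem,
    (∑ k, ((m k - n k : ℤ) : ℝ) • a' k) + q, hsub ⟨m - n, by simp⟩, ?_⟩
  have key : ((∑ k, lam k • a' k) + q) - ((∑ k, ((m k - n k : ℤ) : ℝ) • a' k) + q)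
      = T ((p + ∑ k, (n k : ℝ) • a k) - (p' + ∑ k, (m k : ℝ) • a k)) := by
    have h1 : (p + ∑ k, (n k : ℝ) • a k) - (p' + ∑ k, (m k : ℝ) • a k)
        = ∑ k, (lam k - ((m k - n k : ℤ) : ℝ)) • a k := by
      have : (p + ∑ k, (n k : ℝ) • a k) - (p' + ∑ k, (m k : ℝ) • a k)
          = (p - p') + ∑ k, ((n k : ℝ) - (m k : ℝ)) • a k := by
        rw [Finset.sum_congr rfl fun k _ => sub_smul ((n k : ℝ)) ((m k : ℝ)) (a k),
          Finset.sum_sub_distrib]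
        abel
      rw [this, hrep, ← Finset.sum_add_distrib]
      refine Finset.sum_congr rfl fun k _ => ?_
      rw [← add_smul]
      push_cast
      ring_nf
    have h2 : ∀ k, T ((lam k - ((m k - n k : ℤ) : ℝ)) • a k)
        = lam k • a' k - ((m k - n k : ℤ) : ℝ) • a' k := fun k => by
      rw [map_smul, ← hT, sub_smul]
    rw [h1, map_sum, Finset.sum_congr rfl fun k _ => h2 k, Finset.sum_sub_distrib]
    abel
  rw [dist_eq_norm, dist_eq_norm, key, T.norm_map]
end

section
/- With Λ, a₁, a₂, C₁, C₂ as in the hexagonal 3-particle-basis construction (C₁ = Λ ∪ (Λ + a₂/3) ∪ (Λ + 2a₂/3), C₂ = Λ ∪ (Λ + a₂/3) ∪ (Λ + 2a₁/3 + a₂/3), with r₁ = |a₂|/3 the nearest-neighbor distance): C₁ contains three distinct collinear points x, y, z with |x − y| = |y − z| = r₁ and |x − z| = 2r₁, but C₂ contains no such collinear triple at spacing r₁; conversely, C₂ contains three points forming an equilateral triangle of side r₁, but C₁ does not. In particular, no isometry of ℝ² maps C₁ onto C₂. -/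
noncomputable def pt (s : ℝ) (P Q : ℤ) : EuclideanSpace ℝ (Fin 2) :=
  !₂[(P * s + Q * s / 2) / 3, Q * s * Real.sqrt 3 / 2 / 3]

lemma dist_pt_eq (s : ℝ) (hs : 0 ≤ s) (P Q P' Q' : ℤ) (N : ℤ)
    (hN : (P - P') ^ 2 + (P - P') * (Q - Q') + (Q - Q') ^ 2 = N) :
    dist (pt s P Q) (pt s P' Q') = s / 3 * Real.sqrt N := by
  have h3 : Real.sqrt 3 ^ 2 = 3 := Real.sq_sqrt (by norm_num)
  have hN' : ((P : ℝ) - P') ^ 2 + ((P : ℝ) - P') * ((Q : ℝ) - Q') + ((Q : ℝ) - Q') ^ 2 = (N : ℝ) := by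
    exact_mod_cast congrArg (Int.cast : ℤ → ℝ) hN
  rw [EuclideanSpace.dist_eq, Fin.sum_univ_two]
  simp only [pt, PiLp.toLp_apply, Real.dist_eq, Matrix.cons_val_zero, Matrix.cons_val_one, Matrix.head_cons, sq_abs]
  rw [show (((P : ℝ) * s + Q * s / 2) / 3 - ((P' : ℝ) * s + Q' * s / 2) / 3) ^ 2 +
      ((Q : ℝ) * s * Real.sqrt 3 / 2 / 3 - (Q' : ℝ) * s * Real.sqrt 3 / 2 / 3) ^ 2
      = (s / 3) ^ 2 * N from by
    linear_combination (((Q : ℝ) - Q') ^ 2 * s ^ 2 / 36) * h3 + (s ^ 2 / 9) * hN']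
  rw [Real.sqrt_mul (sq_nonneg _), Real.sqrt_sq (by positivity)]

lemma sol_one (a b : ℤ) (h : a ^ 2 + a * b + b ^ 2 = 1) :
    (a = 1 ∧ b = 0) ∨ (a = -1 ∧ b = 0) ∨ (a = 0 ∧ b = 1) ∨ (a = 0 ∧ b = -1) ∨
    (a = 1 ∧ b = -1) ∨ (a = -1 ∧ b = 1) := by
  have hb2 : b ^ 2 ≤ 1 := by nlinarith [sq_nonneg (2 * a + b)]
  have ha2 : a ^ 2 ≤ 1 := by nlinarith [sq_nonneg (a + 2 * b)]
  have hb1 : -1 ≤ b := by nlinarith [sq_nonneg (b + 1)]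
  have hb2' : b ≤ 1 := by nlinarith [sq_nonneg (b - 1)]
  have ha1 : -1 ≤ a := by nlinarith [sq_nonneg (a + 1)]
  have ha2' : a ≤ 1 := by nlinarith [sq_nonneg (a - 1)]
  interval_cases a <;> interval_cases b <;> simp_all

lemma parallelo (a b c d : ℤ) (h1 : a ^ 2 + a * b + b ^ 2 = 1) (h2 : c ^ 2 + c * d + d ^ 2 = 1)
    (h3 : (a + c) ^ 2 + (a + c) * (b + d) + (b + d) ^ 2 = 4) : a = c ∧ b = d := by
  have key : (a - c) ^ 2 + (a - c) * (b - d) + (b - d) ^ 2 = 0 := by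
    linear_combination 2 * h1 + 2 * h2 - h3
  have h4 : (2 * (a - c) + (b - d)) ^ 2 + 3 * (b - d) ^ 2 = 0 := by linear_combination 4 * key
  have h5 : (b - d) ^ 2 = 0 := by nlinarith [sq_nonneg (2 * (a - c) + (b - d)), sq_nonneg (b - d)]
  have h6 : (2 * (a - c) + (b - d)) ^ 2 = 0 := by linarith
  have hb : b - d = 0 := by have := pow_eq_zero_iff (n := 2) (by norm_num) |>.mp h5; exact this
  have ha : 2 * (a - c) + (b - d) = 0 := by
    have := pow_eq_zero_iff (n := 2) (by norm_num) |>.mp h6; exact this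
  exact ⟨by omega, by omega⟩

/-- The striped crystal `C₁` contains a collinear triple at spacing `r₁ = ‖a₂‖/3` while the
clustered crystal `C₂` does not; `C₂` contains an equilateral triangle of side `r₁` while
`C₁` does not; hence no isometry of `ℝ²` maps `C₁` onto `C₂`. -/
theorem stmt_15 :
    let s : ℝ := Real.sqrt (2 / Real.sqrt 3)
    let a₁ : EuclideanSpace ℝ (Fin 2) := !₂[s, 0]
    let a₂ : EuclideanSpace ℝ (Fin 2) := !₂[s / 2, s * Real.sqrt 3 / 2]
    let Λ : Set (EuclideanSpace ℝ (Fin 2)) := {v | ∃ m n : ℤ, v = m • a₁ + n • a₂}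
    let p₂ : EuclideanSpace ℝ (Fin 2) := (3 : ℝ)⁻¹ • a₂
    let p₃ : EuclideanSpace ℝ (Fin 2) := (2 / 3 : ℝ) • a₂
    let p₃' : EuclideanSpace ℝ (Fin 2) := (2 / 3 : ℝ) • a₁ + (3 : ℝ)⁻¹ • a₂
    let C₁ : Set (EuclideanSpace ℝ (Fin 2)) := Λ ∪ (· + p₂) '' Λ ∪ (· + p₃) '' Λ
    let C₂ : Set (EuclideanSpace ℝ (Fin 2)) := Λ ∪ (· + p₂) '' Λ ∪ (· + p₃') '' Λ
    let r₁ : ℝ := ‖a₂‖ / 3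
    (∃ x ∈ C₁, ∃ y ∈ C₁, ∃ z ∈ C₁, x ≠ y ∧ y ≠ z ∧ x ≠ z ∧
      dist x y = r₁ ∧ dist y z = r₁ ∧ dist x z = 2 * r₁) ∧
    (¬ ∃ x ∈ C₂, ∃ y ∈ C₂, ∃ z ∈ C₂, x ≠ y ∧ y ≠ z ∧ x ≠ z ∧
      dist x y = r₁ ∧ dist y z = r₁ ∧ dist x z = 2 * r₁) ∧
    (∃ x ∈ C₂, ∃ y ∈ C₂, ∃ z ∈ C₂, x ≠ y ∧ y ≠ z ∧ x ≠ z ∧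
      dist x y = r₁ ∧ dist y z = r₁ ∧ dist x z = r₁) ∧
    (¬ ∃ x ∈ C₁, ∃ y ∈ C₁, ∃ z ∈ C₁, x ≠ y ∧ y ≠ z ∧ x ≠ z ∧
      dist x y = r₁ ∧ dist y z = r₁ ∧ dist x z = r₁) ∧
    (¬ ∃ f : EuclideanSpace ℝ (Fin 2) → EuclideanSpace ℝ (Fin 2),
      Isometry f ∧ f '' C₁ = C₂) := by
  intro s a₁ a₂ Λ p₂ p₃ p₃' C₁ C₂ r₁
  have h3 : Real.sqrt 3 ^ 2 = 3 := Real.sq_sqrt (by norm_num)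
  have hs0 : 0 < s := Real.sqrt_pos.mpr (by positivity)
  have ha₁ : a₁ = !₂[s, 0] := rfl
  have ha₂ : a₂ = !₂[s / 2, s * Real.sqrt 3 / 2] := rfl
  have hp₂ : p₂ = (3 : ℝ)⁻¹ • a₂ := rfl
  have hp₃ : p₃ = (2 / 3 : ℝ) • a₂ := rfl
  have hp₃' : p₃' = (2 / 3 : ℝ) • a₁ + (3 : ℝ)⁻¹ • a₂ := rfl
  -- r₁ = s / 3
  have hr : r₁ = s / 3 := by
    show ‖a₂‖ / 3 = s / 3
    rw [ha₂, EuclideanSpace.norm_eq, Fin.sum_univ_two]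
    simp only [Matrix.cons_val_zero, Matrix.cons_val_one, Matrix.head_cons, Real.norm_eq_abs,
      sq_abs]
    rw [show (s / 2) ^ 2 + (s * Real.sqrt 3 / 2) ^ 2 = s ^ 2 from by
      linear_combination (s ^ 2 / 4) * h3]
    rw [Real.sqrt_sq hs0.le]
  have hr₁pos : 0 < r₁ := by rw [hr]; positivity
  -- lattice points in pt form
  have hlat : ∀ m n : ℤ, (m • a₁ + n • a₂ : EuclideanSpace ℝ (Fin 2)) = pt s (3 * m) (3 * n) := by
    intro m n
    rw [← Int.cast_smul_eq_zsmul ℝ m a₁, ← Int.cast_smul_eq_zsmul ℝ n a₂, ha₁, ha₂]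
    ext i
    fin_cases i <;>
      · simp [pt, PiLp.add_apply, PiLp.smul_apply]
        ring
  have hsh₂ : ∀ m n : ℤ,
      ((m • a₁ + n • a₂ : EuclideanSpace ℝ (Fin 2)) + p₂) = pt s (3 * m) (3 * n + 1) := by
    intro m n
    rw [← Int.cast_smul_eq_zsmul ℝ m a₁, ← Int.cast_smul_eq_zsmul ℝ n a₂, hp₂, ha₁, ha₂]
    ext i
    fin_cases i <;>
      · simp [pt, PiLp.add_apply, PiLp.smul_apply]
        ring
  have hsh₃ : ∀ m n : ℤ,
      ((m • a₁ + n • a₂ : EuclideanSpace ℝ (Fin 2)) + p₃) = pt s (3 * m) (3 * n + 2) := by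
    intro m n
    rw [← Int.cast_smul_eq_zsmul ℝ m a₁, ← Int.cast_smul_eq_zsmul ℝ n a₂, hp₃, ha₁, ha₂]
    ext i
    fin_cases i <;>
      · simp [pt, PiLp.add_apply, PiLp.smul_apply]
        ring
  have hsh₃' : ∀ m n : ℤ,
      ((m • a₁ + n • a₂ : EuclideanSpace ℝ (Fin 2)) + p₃') = pt s (3 * m + 2) (3 * n + 1) := by
    intro m n
    rw [← Int.cast_smul_eq_zsmul ℝ m a₁, ← Int.cast_smul_eq_zsmul ℝ n a₂, hp₃', ha₁, ha₂]
    ext i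
    fin_cases i <;>
      · simp [pt, PiLp.add_apply, PiLp.smul_apply]
        ring
  -- membership extraction
  have hext₁ : ∀ q ∈ C₁, ∃ P Q : ℤ, q = pt s P Q ∧ P % 3 = 0 := by
    rintro q ((⟨m, n, rfl⟩ | ⟨y, ⟨m, n, rfl⟩, rfl⟩) | ⟨y, ⟨m, n, rfl⟩, rfl⟩)
    · exact ⟨3 * m, 3 * n, hlat m n, by omega⟩
    · exact ⟨3 * m, 3 * n + 1, hsh₂ m n, by omega⟩
    · exact ⟨3 * m, 3 * n + 2, hsh₃ m n, by omega⟩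
  have hext₂ : ∀ q ∈ C₂, ∃ P Q : ℤ, q = pt s P Q ∧
      ((P % 3 = 0 ∧ Q % 3 = 0) ∨ (P % 3 = 0 ∧ Q % 3 = 1) ∨ (P % 3 = 2 ∧ Q % 3 = 1)) := by
    rintro q ((⟨m, n, rfl⟩ | ⟨y, ⟨m, n, rfl⟩, rfl⟩) | ⟨y, ⟨m, n, rfl⟩, rfl⟩)
    · exact ⟨3 * m, 3 * n, hlat m n, by omega⟩
    · exact ⟨3 * m, 3 * n + 1, hsh₂ m n, by omega⟩
    · exact ⟨3 * m + 2, 3 * n + 1, hsh₃' m n, by omega⟩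
  -- distance conversions
  have hd1 : ∀ P Q P' Q' : ℤ, dist (pt s P Q) (pt s P' Q') = r₁ →
      (P - P') ^ 2 + (P - P') * (Q - Q') + (Q - Q') ^ 2 = 1 := by
    intro P Q P' Q' h
    rw [hr, dist_pt_eq s hs0.le P Q P' Q' _ rfl] at h
    have hsne : s / 3 ≠ 0 := by positivity
    have h2 : Real.sqrt (((P - P') ^ 2 + (P - P') * (Q - Q') + (Q - Q') ^ 2 : ℤ) : ℝ) = 1 :=
      mul_left_cancel₀ hsne (h.trans (mul_one (s / 3)).symm)
    exact_mod_cast Real.sqrt_eq_one.mp h2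
  have hd2 : ∀ P Q P' Q' : ℤ, dist (pt s P Q) (pt s P' Q') = 2 * r₁ →
      (P - P') ^ 2 + (P - P') * (Q - Q') + (Q - Q') ^ 2 = 4 := by
    intro P Q P' Q' h
    rw [hr, dist_pt_eq s hs0.le P Q P' Q' _ rfl] at h
    have hsne : s / 3 ≠ 0 := by positivity
    have h2 : Real.sqrt (((P - P') ^ 2 + (P - P') * (Q - Q') + (Q - Q') ^ 2 : ℤ) : ℝ) = 2 := by
      have : s / 3 * Real.sqrt (((P - P') ^ 2 + (P - P') * (Q - Q') + (Q - Q') ^ 2 : ℤ) : ℝ)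
          = s / 3 * 2 := by rw [h]; ring
      exact mul_left_cancel₀ hsne this
    have hNnn : (0 : ℝ) ≤ (((P - P') ^ 2 + (P - P') * (Q - Q') + (Q - Q') ^ 2 : ℤ) : ℝ) := by
      have : (0 : ℤ) ≤ (P - P') ^ 2 + (P - P') * (Q - Q') + (Q - Q') ^ 2 := by
        nlinarith [sq_nonneg (2 * (P - P') + (Q - Q')), sq_nonneg (Q - Q')]
      exact_mod_cast this
    have h4 : (((P - P') ^ 2 + (P - P') * (Q - Q') + (Q - Q') ^ 2 : ℤ) : ℝ) = 4 := by
      rw [← Real.sq_sqrt hNnn, h2]; norm_num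
    exact_mod_cast h4
  have hdr1 : ∀ P Q P' Q' : ℤ,
      (P - P') ^ 2 + (P - P') * (Q - Q') + (Q - Q') ^ 2 = 1 →
      dist (pt s P Q) (pt s P' Q') = r₁ := by
    intro P Q P' Q' hN
    rw [hr, dist_pt_eq s hs0.le P Q P' Q' 1 hN]
    norm_num
  have hdr2 : ∀ P Q P' Q' : ℤ,
      (P - P') ^ 2 + (P - P') * (Q - Q') + (Q - Q') ^ 2 = 4 →
      dist (pt s P Q) (pt s P' Q') = 2 * r₁ := by
    intro P Q P' Q' hN
    rw [hr, dist_pt_eq s hs0.le P Q P' Q' 4 hN]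
    rw [show ((4 : ℤ) : ℝ) = 2 ^ 2 by norm_num, Real.sqrt_sq (by norm_num)]
    ring
  have hne : ∀ x y : EuclideanSpace ℝ (Fin 2), dist x y = r₁ → x ≠ y := by
    intro x y h he
    rw [he, dist_self] at h
    exact absurd h.symm (ne_of_gt hr₁pos)
  have hne2 : ∀ x y : EuclideanSpace ℝ (Fin 2), dist x y = 2 * r₁ → x ≠ y := by
    intro x y h he
    rw [he, dist_self] at h
    nlinarith
  -- claim 3 : equilateral triangle in C₂
  have claim3 : ∃ x ∈ C₂, ∃ y ∈ C₂, ∃ z ∈ C₂, x ≠ y ∧ y ≠ z ∧ x ≠ z ∧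
      dist x y = r₁ ∧ dist y z = r₁ ∧ dist x z = r₁ := by
    have hm1 : pt s 0 0 ∈ C₂ := Or.inl (Or.inl ⟨0, 0, by rw [hlat]; norm_num⟩)
    have hm2 : pt s 0 1 ∈ C₂ := Or.inl (Or.inr ⟨0 • a₁ + 0 • a₂, ⟨0, 0, rfl⟩, (hsh₂ 0 0).trans (by norm_num)⟩)
    have hm3 : pt s (-1) 1 ∈ C₂ := Or.inr ⟨(-1) • a₁ + 0 • a₂, ⟨-1, 0, rfl⟩, (hsh₃' (-1) 0).trans (by norm_num)⟩
    have d1 : dist (pt s 0 0) (pt s 0 1) = r₁ := hdr1 0 0 0 1 (by norm_num)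
    have d2 : dist (pt s 0 1) (pt s (-1) 1) = r₁ := hdr1 0 1 (-1) 1 (by norm_num)
    have d3 : dist (pt s 0 0) (pt s (-1) 1) = r₁ := hdr1 0 0 (-1) 1 (by norm_num)
    exact ⟨_, hm1, _, hm2, _, hm3, hne _ _ d1, hne _ _ d2, hne _ _ d3, d1, d2, d3⟩
  -- claim 4 : no equilateral triangle in C₁
  have claim4 : ¬ ∃ x ∈ C₁, ∃ y ∈ C₁, ∃ z ∈ C₁, x ≠ y ∧ y ≠ z ∧ x ≠ z ∧
      dist x y = r₁ ∧ dist y z = r₁ ∧ dist x z = r₁ := by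
    rintro ⟨x, hx, y, hy, z, hz, hxy, hyz, hxz, d1, d2, d3⟩
    obtain ⟨P1, Q1, rfl, t1⟩ := hext₁ x hx
    obtain ⟨P2, Q2, rfl, t2⟩ := hext₁ y hy
    obtain ⟨P3, Q3, rfl, t3⟩ := hext₁ z hz
    have e1 := hd1 _ _ _ _ d1
    have e2 := hd1 _ _ _ _ d2
    have e3 := hd1 _ _ _ _ d3
    have s1 := sol_one _ _ e1
    have s2 := sol_one _ _ e2
    have s3 := sol_one _ _ e3
    omega
  refine ⟨?_, ?_, claim3, claim4, ?_⟩
  -- claim 1 : collinear triple in C₁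
  · have hm1 : pt s 0 0 ∈ C₁ := Or.inl (Or.inl ⟨0, 0, by rw [hlat]; norm_num⟩)
    have hm2 : pt s 0 1 ∈ C₁ := Or.inl (Or.inr ⟨0 • a₁ + 0 • a₂, ⟨0, 0, rfl⟩, (hsh₂ 0 0).trans (by norm_num)⟩)
    have hm3 : pt s 0 2 ∈ C₁ := Or.inr ⟨0 • a₁ + 0 • a₂, ⟨0, 0, rfl⟩, (hsh₃ 0 0).trans (by norm_num)⟩
    have d1 : dist (pt s 0 0) (pt s 0 1) = r₁ := hdr1 0 0 0 1 (by norm_num)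
    have d2 : dist (pt s 0 1) (pt s 0 2) = r₁ := hdr1 0 1 0 2 (by norm_num)
    have d3 : dist (pt s 0 0) (pt s 0 2) = 2 * r₁ := hdr2 0 0 0 2 (by norm_num)
    exact ⟨_, hm1, _, hm2, _, hm3, hne _ _ d1, hne _ _ d2, hne2 _ _ d3, d1, d2, d3⟩
  -- claim 2 : no collinear triple in C₂
  · rintro ⟨x, hx, y, hy, z, hz, hxy, hyz, hxz, d1, d2, d3⟩
    obtain ⟨P1, Q1, rfl, t1⟩ := hext₂ x hx
    obtain ⟨P2, Q2, rfl, t2⟩ := hext₂ y hy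
    obtain ⟨P3, Q3, rfl, t3⟩ := hext₂ z hz
    have e1 := hd1 _ _ _ _ d1
    have e2 := hd1 _ _ _ _ d2
    have e3 := hd2 _ _ _ _ d3
    have e3' : ((P1 - P2) + (P2 - P3)) ^ 2 + ((P1 - P2) + (P2 - P3)) * ((Q1 - Q2) + (Q2 - Q3))
        + ((Q1 - Q2) + (Q2 - Q3)) ^ 2 = 4 := by linear_combination e3
    obtain ⟨hac, hbd⟩ := parallelo _ _ _ _ e1 e2 e3'
    have s1 := sol_one _ _ e1
    omega
  -- claim 5 : no isometry
  · rintro ⟨f, hf, him⟩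
    obtain ⟨x, hx, y, hy, z, hz, hxy, hyz, hxz, d1, d2, d3⟩ := claim3
    rw [← him] at hx hy hz
    obtain ⟨x', hx', rfl⟩ := hx
    obtain ⟨y', hy', rfl⟩ := hy
    obtain ⟨z', hz', rfl⟩ := hz
    exact claim4 ⟨x', hx', y', hy', z', hz',
      fun h => hxy (by rw [h]), fun h => hyz (by rw [h]), fun h => hxz (by rw [h]),
      by rw [← hf.dist_eq x' y']; exact d1,
      by rw [← hf.dist_eq y' z']; exact d2,
      by rw [← hf.dist_eq x' z']; exact d3⟩
end
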